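/- For x ≥ 1 let L(x) denote the smallest positive integer with 2^{L(x)} > L(x)·x + 1. Let ε ∈ (0,1), let z > 0, and let J be a finite set of reals contained in the interval [z/2, z] with |J| ≥ L(4/ε). Then there exist nonempty disjoint subsets X, Y ⊆ J with R(X,Y) ≤ 1 + ε. -/

import Mathlib

/-- The ratio `R(X,Y) = max{Σ(X)/Σ(Y), Σ(Y)/Σ(X)}` of two finite sets of reals. -/
noncomputable def ratio (X Y : Finset ℝ) : ℝ :=
  max (X.sum id / Y.sum id) (Y.sum id / X.sum id)

/-- `L(x)`: the smallest positive integer `L` with `2^L > L·x + 1`. -/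
noncomputable def LL (x : ℝ) : ℕ :=
  sInf {L : ℕ | 0 < L ∧ (2 : ℝ) ^ L > L * x + 1}

lemma LL_spec (x : ℝ) (hx : 0 < x) :
    0 < LL x ∧ (2 : ℝ) ^ LL x > LL x * x + 1 := by
  have hne : {L : ℕ | 0 < L ∧ (2 : ℝ) ^ L > L * x + 1}.Nonempty := by
    obtain ⟨N, hN⟩ := exists_nat_ge x
    refine ⟨2 * N + 2, by omega, ?_⟩
    have h1 : (N : ℝ) + 1 ≤ 2 ^ N := by
      have := @Nat.lt_two_pow_self N
      exact_mod_cast this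
    have h2 : (2 : ℝ) ^ (2 * N + 2) = 4 * (2 ^ N) ^ 2 := by
      rw [show 2 * N + 2 = N + N + 2 by ring, pow_add, pow_add]; ring
    push_cast
    rw [h2]
    nlinarith [sq_nonneg ((N : ℝ) + 1), hx]
  exact Nat.sInf_mem hne

lemma two_pow_gt (x : ℝ) (hx : 0 < x) {n : ℕ} (hn : LL x ≤ n) :
    (n : ℝ) * x + 1 < 2 ^ n := by
  induction n, hn using Nat.le_induction with
  | base => exact (LL_spec x hx).2
  | succ n hn ih =>
    have hL : 0 < LL x := (LL_spec x hx).1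
    have h1 : (1 : ℝ) ≤ n := by exact_mod_cast le_trans hL hn
    push_cast
    calc ((n : ℝ) + 1) * x + 1 ≤ 2 * ((n : ℝ) * x + 1) := by nlinarith
      _ < 2 * 2 ^ n := by linarith
      _ = 2 ^ (n + 1) := by ring

/-- **Dense case.** If `J ⊆ [z/2, z]` with `z > 0` and `|J| ≥ L(4/ε)`, then there are
nonempty disjoint subsets `X, Y ⊆ J` with `R(X,Y) ≤ 1 + ε`. -/
theorem dense_case (ε : ℝ) (hε : ε ∈ Set.Ioo (0 : ℝ) 1) (z : ℝ) (hz : 0 < z)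
    (J : Finset ℝ) (hJ : ∀ x ∈ J, z / 2 ≤ x ∧ x ≤ z) (hcard : LL (4 / ε) ≤ J.card) :
    ∃ X Y : Finset ℝ, X ⊆ J ∧ Y ⊆ J ∧ Disjoint X Y ∧ X.Nonempty ∧ Y.Nonempty ∧
      ratio X Y ≤ 1 + ε := by
  obtain ⟨hε0, hε1⟩ := hε
  set n := J.card with hn
  set δ := ε * z / 4 with hδ
  have hδ0 : 0 < δ := by positivity
  have hpow : (n : ℝ) * (4 / ε) + 1 < 2 ^ n := two_pow_gt _ (by positivity) hcard
  set M := ⌊(n : ℝ) * z / δ⌋₊ with hM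
  have hMlt : M + 1 < 2 ^ n := by
    have h1 : (M : ℝ) ≤ (n : ℝ) * z / δ := Nat.floor_le (by positivity)
    have h2 : (n : ℝ) * z / δ = n * (4 / ε) := by
      rw [hδ]; field_simp
    have h3 : (M : ℝ) + 1 < 2 ^ n := by rw [h2] at h1; linarith
    exact_mod_cast h3
  -- nonnegativity of sums of subsets
  have hnonneg : ∀ C : Finset ℝ, C ⊆ J → 0 ≤ C.sum id := fun C hC =>
    Finset.sum_nonneg fun i hi => le_trans (by linarith) (hJ i (hC hi)).1
  have hlow : ∀ C : Finset ℝ, C ⊆ J → C.Nonempty → z / 2 ≤ C.sum id := by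
    rintro C hC ⟨c, hc⟩
    calc z / 2 ≤ c := (hJ c (hC hc)).1
      _ = id c := rfl
      _ ≤ C.sum id :=
        Finset.single_le_sum (fun i hi => le_trans (by linarith) (hJ i (hC hi)).1) hc
  have hmaps : ∀ A ∈ J.powerset, ⌊A.sum id / δ⌋₊ ∈ Finset.range (M + 1) := by
    intro A hA
    rw [Finset.mem_powerset] at hA
    have hsum : A.sum id ≤ (n : ℝ) * z := by
      calc A.sum id ≤ A.sum (fun _ => z) :=
            Finset.sum_le_sum fun i hi => (hJ i (hA hi)).2
        _ = A.card * z := by simp [Finset.sum_const, nsmul_eq_mul]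
        _ ≤ (n : ℝ) * z := by
          have h4 : (A.card : ℝ) ≤ (n : ℝ) := by
            exact_mod_cast Finset.card_le_card hA
          nlinarith
    rw [Finset.mem_range]
    have h5 : ⌊A.sum id / δ⌋₊ ≤ M := Nat.floor_le_floor (by gcongr)
    omega
  have hcardlt : (Finset.range (M + 1)).card < J.powerset.card := by
    rw [Finset.card_range, Finset.card_powerset]
    exact hMlt
  obtain ⟨A, hA, B, hB, hAB, hfeq⟩ :=
    Finset.exists_ne_map_eq_of_card_lt_of_maps_to hcardlt hmaps
  rw [Finset.mem_powerset] at hA hB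
  -- |Σ A - Σ B| < δ
  have habs : |A.sum id - B.sum id| < δ := by
    have h1 : (⌊A.sum id / δ⌋₊ : ℝ) ≤ A.sum id / δ :=
      Nat.floor_le (div_nonneg (hnonneg A hA) hδ0.le)
    have h2 : A.sum id / δ < ⌊A.sum id / δ⌋₊ + 1 := Nat.lt_floor_add_one _
    have h3 : (⌊B.sum id / δ⌋₊ : ℝ) ≤ B.sum id / δ :=
      Nat.floor_le (div_nonneg (hnonneg B hB) hδ0.le)
    have h4 : B.sum id / δ < ⌊B.sum id / δ⌋₊ + 1 := Nat.lt_floor_add_one _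
    rw [hfeq] at h1 h2
    rw [abs_sub_lt_iff]
    constructor
    · calc A.sum id - B.sum id = (A.sum id / δ - B.sum id / δ) * δ := by
            field_simp
        _ < 1 * δ := by
            apply mul_lt_mul_of_pos_right _ hδ0
            linarith
        _ = δ := one_mul δ
    · calc B.sum id - A.sum id = (B.sum id / δ - A.sum id / δ) * δ := by
            field_simp
        _ < 1 * δ := by
            apply mul_lt_mul_of_pos_right _ hδ0
            linarith
        _ = δ := one_mul δ
  set X := A \ B with hX
  set Y := B \ A with hY
  have hXJ : X ⊆ J := (Finset.sdiff_subset).trans hA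
  have hYJ : Y ⊆ J := (Finset.sdiff_subset).trans hB
  have hsumdiff : X.sum id - Y.sum id = A.sum id - B.sum id := by
    have e1 : X.sum id = A.sum id - (A ∩ B).sum id := by
      rw [hX, ← Finset.sdiff_inter_self_left A B]
      exact Finset.sum_sdiff_eq_sub Finset.inter_subset_left
    have e2 : Y.sum id = B.sum id - (B ∩ A).sum id := by
      rw [hY, ← Finset.sdiff_inter_self_left B A]
      exact Finset.sum_sdiff_eq_sub Finset.inter_subset_left
    rw [Finset.inter_comm] at e2
    rw [e1, e2]; ring
  have habsXY : |X.sum id - Y.sum id| < δ := by rwa [hsumdiff]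
  rw [abs_sub_lt_iff] at habsXY
  obtain ⟨hd1, hd2⟩ := habsXY
  have hδz : δ < z / 2 := by rw [hδ]; nlinarith
  have hXne : X.Nonempty := by
    rw [Finset.nonempty_iff_ne_empty]
    intro h
    have hsub : A ⊆ B := by rwa [Finset.sdiff_eq_empty_iff_subset] at h
    have hYne : Y.Nonempty := by
      rw [Finset.nonempty_iff_ne_empty]
      intro h'
      have hsub' : B ⊆ A := by rwa [Finset.sdiff_eq_empty_iff_subset] at h'
      exact hAB (Finset.Subset.antisymm hsub hsub')
    have hYlow := hlow Y hYJ hYne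
    have hX0 : X.sum id = 0 := by rw [h, Finset.sum_empty]
    linarith
  have hYne : Y.Nonempty := by
    rw [Finset.nonempty_iff_ne_empty]
    intro h
    have hsub : B ⊆ A := by rwa [Finset.sdiff_eq_empty_iff_subset] at h
    have hXlow := hlow X hXJ hXne
    have hY0 : Y.sum id = 0 := by rw [h, Finset.sum_empty]
    linarith
  have hXlow := hlow X hXJ hXne
  have hYlow := hlow Y hYJ hYne
  have hX0 : 0 < X.sum id := lt_of_lt_of_le (by linarith) hXlow
  have hY0 : 0 < Y.sum id := lt_of_lt_of_le (by linarith) hYlow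
  refine ⟨X, Y, hXJ, hYJ, disjoint_sdiff_sdiff, hXne, hYne, ?_⟩
  rw [ratio]
  have hεY : δ ≤ ε * Y.sum id := by
    rw [hδ]; nlinarith
  have hεX : δ ≤ ε * X.sum id := by
    rw [hδ]; nlinarith
  apply max_le
  · rw [div_le_iff₀ hY0]; nlinarith
  · rw [div_le_iff₀ hX0]; nlinarith
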